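/- Let T be a bounded linear operator on a complex Hilbert space H and let δ, η ∈ [0,1]. Let X be the operator on the Hilbert space direct sum H ⊕ H defined by X (h, k) = (T h + δ T k, η T k), and set β = 1 + δ² + η². Then ‖X‖² ≤ (1/2)·(β + √(β² − 4η²))·‖T‖². -/
import Mathlib


open ContinuousLinearMap in
/-- The block operator `X (h, m) = (T h + A m, B m)` on the Hilbert direct sum `H ⊕₂ M`. -/
noncomputable def blockOp {H M : Type*} [NormedAddCommGroup H] [InnerProductSpace ℂ H]
    [NormedAddCommGroup M] [InnerProductSpace ℂ M]
    (T : H →L[ℂ] H) (A : M →L[ℂ] H) (B : M →L[ℂ] M) :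
    WithLp 2 (H × M) →L[ℂ] WithLp 2 (H × M) :=
  ((WithLp.prodContinuousLinearEquiv 2 ℂ H M).symm : H × M →L[ℂ] WithLp 2 (H × M)) ∘L
    ((T ∘L fst ℂ H M + A ∘L snd ℂ H M).prod (B ∘L snd ℂ H M)) ∘L
    ((WithLp.prodContinuousLinearEquiv 2 ℂ H M) : WithLp 2 (H × M) →L[ℂ] H × M)

/-- Key scalar inequality: with `λ = (β + √(β²-4η²))/2`, `β = 1+δ²+η²`, one has
`(a+δb)² + η²b² ≤ λ(a²+b²)` for `a, b ≥ 0`. -/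
lemma key_scalar (δ η a b : ℝ) (hδ : 0 ≤ δ) (hη : 0 ≤ η) (ha : 0 ≤ a) (hb : 0 ≤ b) :
    (a + δ * b) ^ 2 + η ^ 2 * b ^ 2 ≤
      (1 / 2) * ((1 + δ ^ 2 + η ^ 2) + Real.sqrt ((1 + δ ^ 2 + η ^ 2) ^ 2 - 4 * η ^ 2)) *
        (a ^ 2 + b ^ 2) := by
  set β : ℝ := 1 + δ ^ 2 + η ^ 2 with hβ
  have hD : (β - 2) ^ 2 ≤ β ^ 2 - 4 * η ^ 2 := by nlinarith [sq_nonneg δ]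
  have hD0 : (0 : ℝ) ≤ β ^ 2 - 4 * η ^ 2 := le_trans (sq_nonneg _) hD
  set s : ℝ := Real.sqrt (β ^ 2 - 4 * η ^ 2) with hs
  have hs0 : 0 ≤ s := Real.sqrt_nonneg _
  have hs_sq : s ^ 2 = β ^ 2 - 4 * η ^ 2 := Real.sq_sqrt hD0
  have hs_ge : |β - 2| ≤ s := by
    rw [hs]
    have := Real.sqrt_le_sqrt hD
    rwa [Real.sqrt_sq_eq_abs] at this
  have hu : 0 ≤ (s + (β - 2)) / 2 := by
    have := neg_abs_le (β - 2); linarith [hs_ge]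
  have hv : 0 ≤ (s - (β - 2)) / 2 := by
    have := le_abs_self (β - 2); linarith [hs_ge]
  have huv : ((s + (β - 2)) / 2) * ((s - (β - 2)) / 2) = δ ^ 2 := by
    have h : ((s + (β - 2)) / 2) * ((s - (β - 2)) / 2) = (s ^ 2 - (β - 2) ^ 2) / 4 := by ring
    rw [h, hs_sq]; nlinarith
  have hδeq : δ = Real.sqrt ((s + (β - 2)) / 2) * Real.sqrt ((s - (β - 2)) / 2) := by
    rw [← Real.sqrt_mul hu, huv, Real.sqrt_sq hδ]
  have key : 2 * δ * (a * b) ≤ ((s + (β - 2)) / 2) * a ^ 2 + ((s - (β - 2)) / 2) * b ^ 2 := by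
    have h2 := two_mul_le_add_sq (Real.sqrt ((s + (β - 2)) / 2) * a)
      (Real.sqrt ((s - (β - 2)) / 2) * b)
    have e1 : (Real.sqrt ((s + (β - 2)) / 2) * a) ^ 2 = ((s + (β - 2)) / 2) * a ^ 2 := by
      rw [mul_pow, Real.sq_sqrt hu]
    have e2 : (Real.sqrt ((s - (β - 2)) / 2) * b) ^ 2 = ((s - (β - 2)) / 2) * b ^ 2 := by
      rw [mul_pow, Real.sq_sqrt hv]
    calc 2 * δ * (a * b)
        = 2 * (Real.sqrt ((s + (β - 2)) / 2) * a) * (Real.sqrt ((s - (β - 2)) / 2) * b) := by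
          rw [hδeq]; ring
      _ ≤ (Real.sqrt ((s + (β - 2)) / 2) * a) ^ 2 + (Real.sqrt ((s - (β - 2)) / 2) * b) ^ 2 := h2
      _ = ((s + (β - 2)) / 2) * a ^ 2 + ((s - (β - 2)) / 2) * b ^ 2 := by rw [e1, e2]
  nlinarith [key, sq_nonneg δ, sq_nonneg η]

set_option maxHeartbeats 1000000 in
set_option synthInstance.maxHeartbeats 400000 in
/-- For the operator `X (h, k) = (T h + δ T k, η T k)` on `H ⊕₂ H` and `β = 1 + δ² + η²`,
one has `‖X‖² ≤ (1/2)(β + √(β² − 4η²))‖T‖²`. -/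
theorem statement2 {H : Type*} [NormedAddCommGroup H] [InnerProductSpace ℂ H]
    (T : H →L[ℂ] H) (δ η : ℝ) (hδ : δ ∈ Set.Icc (0 : ℝ) 1) (hη : η ∈ Set.Icc (0 : ℝ) 1) :
    ‖blockOp T ((δ : ℂ) • T) ((η : ℂ) • T)‖ ^ 2 ≤
      (1 / 2) * ((1 + δ ^ 2 + η ^ 2) + Real.sqrt ((1 + δ ^ 2 + η ^ 2) ^ 2 - 4 * η ^ 2)) *
        ‖T‖ ^ 2 := by
  obtain ⟨hδ0, -⟩ := hδ
  obtain ⟨hη0, -⟩ := hη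
  set lam : ℝ :=
    (1 / 2) * ((1 + δ ^ 2 + η ^ 2) + Real.sqrt ((1 + δ ^ 2 + η ^ 2) ^ 2 - 4 * η ^ 2)) with hlam
  have hlam0 : 0 ≤ lam := by
    have h1 : (0:ℝ) ≤ 1 + δ ^ 2 + η ^ 2 := by positivity
    have h2 := Real.sqrt_nonneg ((1 + δ ^ 2 + η ^ 2) ^ 2 - 4 * η ^ 2)
    rw [hlam]; linarith
  set c : ℝ := Real.sqrt lam * ‖T‖ with hc
  have hc0 : 0 ≤ c := by positivity
  have hbound : ‖blockOp T ((δ : ℂ) • T) ((η : ℂ) • T)‖ ≤ c := by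
    refine ContinuousLinearMap.opNorm_le_bound _ hc0 fun x => ?_
    have hsq : ‖blockOp T ((δ : ℂ) • T) ((η : ℂ) • T) x‖ ^ 2 ≤ (c * ‖x‖) ^ 2 := by
      rw [WithLp.prod_norm_sq_eq_of_L2]
      have h1 : (blockOp T ((δ : ℂ) • T) ((η : ℂ) • T) x).fst
          = T x.fst + (δ : ℂ) • T x.snd := rfl
      have h2 : (blockOp T ((δ : ℂ) • T) ((η : ℂ) • T) x).snd
          = (η : ℂ) • T x.snd := rfl
      rw [h1, h2]
      have ha : ‖T x.fst + (δ : ℂ) • T x.snd‖ ≤ ‖T‖ * ‖x.fst‖ + δ * (‖T‖ * ‖x.snd‖) := by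
        refine le_trans (norm_add_le _ _) ?_
        gcongr
        · exact T.le_opNorm _
        · rw [norm_smul]
          simp only [Complex.norm_real, Real.norm_eq_abs, abs_of_nonneg hδ0]
          exact mul_le_mul_of_nonneg_left (T.le_opNorm _) hδ0
      have hb : ‖(η : ℂ) • T x.snd‖ ≤ η * (‖T‖ * ‖x.snd‖) := by
        rw [norm_smul]
        simp only [Complex.norm_real, Real.norm_eq_abs, abs_of_nonneg hη0]
        exact mul_le_mul_of_nonneg_left (T.le_opNorm _) hη0
      have hT0 : 0 ≤ ‖T‖ := norm_nonneg _
      have step1 : ‖T x.fst + (δ : ℂ) • T x.snd‖ ^ 2 + ‖(η : ℂ) • T x.snd‖ ^ 2 ≤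
          (‖T‖ * ‖x.fst‖ + δ * (‖T‖ * ‖x.snd‖)) ^ 2 + (η * (‖T‖ * ‖x.snd‖)) ^ 2 := by
        gcongr <;> first | positivity | exact ha | exact hb
      refine step1.trans ?_
      have key := key_scalar δ η (‖T‖ * ‖x.fst‖) (‖T‖ * ‖x.snd‖) hδ0 hη0
        (by positivity) (by positivity)
      have hx : ‖x‖ ^ 2 = ‖x.fst‖ ^ 2 + ‖x.snd‖ ^ 2 := WithLp.prod_norm_sq_eq_of_L2 x
      have hcsq : (c * ‖x‖) ^ 2 = lam * (‖T‖ ^ 2 * ‖x‖ ^ 2) := by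
        rw [hc]
        rw [mul_pow, mul_pow, Real.sq_sqrt hlam0]
        ring
      rw [hcsq, hx]
      calc (‖T‖ * ‖x.fst‖ + δ * (‖T‖ * ‖x.snd‖)) ^ 2 + (η * (‖T‖ * ‖x.snd‖)) ^ 2
          = (‖T‖ * ‖x.fst‖ + δ * (‖T‖ * ‖x.snd‖)) ^ 2
            + η ^ 2 * (‖T‖ * ‖x.snd‖) ^ 2 := by ring
        _ ≤ lam * ((‖T‖ * ‖x.fst‖) ^ 2 + (‖T‖ * ‖x.snd‖) ^ 2) := key
        _ = lam * (‖T‖ ^ 2 * (‖x.fst‖ ^ 2 + ‖x.snd‖ ^ 2)) := by ring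
    calc ‖blockOp T ((δ : ℂ) • T) ((η : ℂ) • T) x‖
        = Real.sqrt (‖blockOp T ((δ : ℂ) • T) ((η : ℂ) • T) x‖ ^ 2) :=
          (Real.sqrt_sq (norm_nonneg _)).symm
      _ ≤ Real.sqrt ((c * ‖x‖) ^ 2) := Real.sqrt_le_sqrt hsq
      _ = c * ‖x‖ := Real.sqrt_sq (by positivity)
  calc ‖blockOp T ((δ : ℂ) • T) ((η : ℂ) • T)‖ ^ 2 ≤ c ^ 2 := by gcongr
    _ = lam * ‖T‖ ^ 2 := by rw [hc, mul_pow, Real.sq_sqrt hlam0]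
    _ = _ := by rw [hlam]
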